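/- Let 𝒢 be bipartite with partite classes P₁, P₂, X an n.n.constraint space and X_a a fold of X where a is folded into b. Let 𝒱₁, 𝒱₂ and x^v (v ∈ 𝒱₁ ∪ 𝒱₂) be as in the construction of special configurations. Let M be a Markov cocycle on X such that M|_{Δ_{X_a}} is a Gibbs cocycle with some nearest neighbour interaction V, and let V′ be a nearest neighbour interaction on X for which the following pairs are all V′-good: (1) every pair in Δ_{X_a}; (2) (θ^v_b(x^v), x^v) for every v ∈ 𝒱₁ ∪ 𝒱₂; (3) (θ^w_c(x^v), x^v) for every v ∈ 𝒱₁ ∪ 𝒱₂, w ∼ v, c ∈ 𝒜∖{a} with (a at v, c at w) ∈ ℬ_{{v,w}}(X); (4) (θ^w_a(x^v), x^v) for every v ∈ 𝒱₁ ∩ P₁, w ∼ v with (a at v, a at w) ∈ ℬ_{{v,w}}(X). Then M is the Gibbs cocycle of the nearest neighbour interaction V′; in particular M ∈ 𝐆_X. -/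

import Mathlib

open scoped Classical

namespace HC

variable {V : Type*} {A : Type*}

/-- The external vertex boundary of a set of vertices. -/
def boundary (G : SimpleGraph V) (F : Set V) : Set V :=
  {u | u ∉ F ∧ ∃ v ∈ F, G.Adj u v}

/-- The language of `X` on `F`: the set of patterns on `F` appearing in `X`. -/
def lang (X : Set (V → A)) (F : Set V) : Set (F → A) :=
  F.restrict '' X

/-- The `n`-ball around `v` in the graph metric. -/
def ballSet (G : SimpleGraph V) (v : V) (n : ℕ) : Set V :=
  {u | ∃ p : G.Walk v u, p.length ≤ n}

/-- Asymptotic pairs: pairs of configurations in `X` differing at finitely many sites. -/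
def Delta (X : Set (V → A)) : Set ((V → A) × (V → A)) :=
  {p | p.1 ∈ X ∧ p.2 ∈ X ∧ {v | p.1 v ≠ p.2 v}.Finite}

/-- Topological Markov field. -/
def IsTMF [TopologicalSpace A] (G : SimpleGraph V) (X : Set (V → A)) : Prop :=
  IsClosed X ∧
    ∀ x ∈ X, ∀ y ∈ X, ∀ F : Set V, F.Finite →
      (∀ u ∈ boundary G F, x u = y u) →
      (fun v => if v ∈ F then x v else y v) ∈ X

/-- Nearest neighbour constraint space: the set of configurations avoiding a
set of forbidden patterns on finite cliques. -/
def IsNNConstraint (G : SimpleGraph V) (X : Set (V → A)) : Prop :=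
  ∃ 𝓕 : ∀ F : Set V, Set (F → A),
    X = {x : V → A | ∀ F : Set V, F.Finite → G.IsClique F → F.restrict x ∉ 𝓕 F}

/-- `s` is a safe symbol for `X`. -/
def IsSafeSymbol (X : Set (V → A)) (s : A) : Prop :=
  ∀ x ∈ X, ∀ S : Set V, (fun v => if v ∈ S then x v else s) ∈ X

/-- The pattern `(c at v, d at w)` belongs to the language of `X`. -/
def edgeB (X : Set (V → A)) (v w : V) (c d : A) : Prop :=
  ∃ x ∈ X, x v = c ∧ x w = d

/-- The single-site pattern `c at v` belongs to the language of `X`. -/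
def siteB (X : Set (V → A)) (v : V) (c : A) : Prop :=
  ∃ x ∈ X, x v = c

/-- The pairs `(x,y)` and `(z,w)` are Markov-similar. -/
def MarkovSimilar (G : SimpleGraph V) (x y z w : V → A) : Prop :=
  ∃ S : Set V, S.Finite ∧
    (∀ u, u ∉ S → x u = y u ∧ z u = w u) ∧
    (∀ u, u ∈ S ∪ boundary G S → x u = z u ∧ y u = w u)

/-- A Markov cocycle on `X` (realised as a real function on pairs of
configurations, vanishing off the asymptotic relation `Δ_X`). -/
def IsMarkovCocycle (G : SimpleGraph V) (X : Set (V → A))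
    (M : (V → A) → (V → A) → ℝ) : Prop :=
  (∀ x y : V → A, (x, y) ∉ Delta X → M x y = 0) ∧
  (∀ x y z : V → A, (x, y) ∈ Delta X → (y, z) ∈ Delta X → M x z = M x y + M y z) ∧
  (∀ x y z w : V → A, (x, y) ∈ Delta X → (z, w) ∈ Delta X →
    MarkovSimilar G x y z w → M x y = M z w)

/-- A nearest neighbour interaction: a real weight for each pattern,
vanishing on patterns whose domain is not a finite clique. -/
def IsNNInteraction (G : SimpleGraph V) (U : ∀ F : Set V, (F → A) → ℝ) : Prop :=
  ∀ F : Set V, ¬(F.Finite ∧ G.IsClique F) → ∀ p : F → A, U F p = 0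

/-- `Σ_{F ⊆ V finite} (U(y|_F) - U(x|_F))`. -/
noncomputable def gibbsSum (U : ∀ F : Set V, (F → A) → ℝ) (x y : V → A) : ℝ :=
  ∑ᶠ F : Set V, (U F (F.restrict y) - U F (F.restrict x))

/-- A Gibbs cocycle with some nearest neighbour interaction. -/
def IsGibbsCocycle (G : SimpleGraph V) (X : Set (V → A))
    (M : (V → A) → (V → A) → ℝ) : Prop :=
  (∀ x y : V → A, (x, y) ∉ Delta X → M x y = 0) ∧
  ∃ U : ∀ F : Set V, (F → A) → ℝ, IsNNInteraction G U ∧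
    ∀ x y : V → A, (x, y) ∈ Delta X → M x y = gibbsSum U x y

/-- The space `𝐌_X` of Markov cocycles on `X`. -/
def markovSet (G : SimpleGraph V) (X : Set (V → A)) :
    Set ((V → A) → (V → A) → ℝ) :=
  {M | IsMarkovCocycle G X M}

/-- The space `𝐆_X` of Gibbs cocycles with nearest neighbour interactions on `X`. -/
def gibbsSet (G : SimpleGraph V) (X : Set (V → A)) :
    Set ((V → A) → (V → A) → ℝ) :=
  {M | IsGibbsCocycle G X M}

/-- `X` is Hammersley-Clifford: `𝐌_X = 𝐆_X`. -/
def IsHammersleyClifford (G : SimpleGraph V) (X : Set (V → A)) : Prop :=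
  markovSet G X = gibbsSet G X

/-- The action of a permutation of the vertices on configurations. -/
def confAct (g : Equiv.Perm V) (x : V → A) : V → A :=
  fun v => x (g⁻¹ v)

/-- `S` consists of automorphisms of the graph `G`. -/
def PreservesAdj (G : SimpleGraph V) (S : Subgroup (Equiv.Perm V)) : Prop :=
  ∀ g ∈ S, ∀ u v : V, G.Adj (g u) (g v) ↔ G.Adj u v

/-- `X` is invariant under the subgroup `S`. -/
def InvariantSpace (S : Subgroup (Equiv.Perm V)) (X : Set (V → A)) : Prop :=
  ∀ g ∈ S, confAct g '' X = X

/-- The cocycle `M` is `S`-invariant. -/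
def InvariantCocycle (S : Subgroup (Equiv.Perm V)) (M : (V → A) → (V → A) → ℝ) : Prop :=
  ∀ g ∈ S, ∀ x y : V → A, M (confAct g x) (confAct g y) = M x y

/-- The interaction `U` is `S`-invariant: `U(ga) = U(a)` for every pattern `a`. -/
def InvariantInteraction (S : Subgroup (Equiv.Perm V))
    (U : ∀ F : Set V, (F → A) → ℝ) : Prop :=
  ∀ g ∈ S, ∀ F : Set V, ∀ x : V → A,
    U (⇑g '' F) ((⇑g '' F).restrict (confAct g x)) = U F (F.restrict x)

/-- The space `𝐌^G_X` of `S`-invariant Markov cocycles on `X`. -/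
def markovSetInv (G : SimpleGraph V) (S : Subgroup (Equiv.Perm V)) (X : Set (V → A)) :
    Set ((V → A) → (V → A) → ℝ) :=
  {M | IsMarkovCocycle G X M ∧ InvariantCocycle S M}

/-- The space `𝐆^G_X` of Gibbs cocycles with `S`-invariant nearest neighbour
interactions on `X`. -/
def gibbsSetInv (G : SimpleGraph V) (S : Subgroup (Equiv.Perm V)) (X : Set (V → A)) :
    Set ((V → A) → (V → A) → ℝ) :=
  {M | (∀ x y : V → A, (x, y) ∉ Delta X → M x y = 0) ∧
    ∃ U : ∀ F : Set V, (F → A) → ℝ, IsNNInteraction G U ∧ InvariantInteraction S U ∧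
      ∀ x y : V → A, (x, y) ∈ Delta X → M x y = gibbsSum U x y}

/-- `X` is `G`-Hammersley-Clifford: `𝐌^G_X = 𝐆^G_X`. -/
def IsGHammersleyClifford (G : SimpleGraph V) (S : Subgroup (Equiv.Perm V))
    (X : Set (V → A)) : Prop :=
  markovSetInv G S X = gibbsSetInv G S X

/-- The symbol `a` can be folded into the symbol `b` in `X`. -/
def FoldsInto (G : SimpleGraph V) (X : Set (V → A)) (a b : A) : Prop :=
  a ≠ b ∧
    ∀ v₁ v₂ v₃ : V, G.Adj v₁ v₂ → G.Adj v₂ v₃ → ∀ c : A,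
      edgeB X v₁ v₂ a c →
        edgeB X v₁ v₂ b c ∧ edgeB X v₂ v₃ c b ∧
          ∃ x ∈ X, ∀ u ∈ boundary G (ballSet G v₁ 1), x u = b

/-- `X ∩ (𝒜∖{a})^𝒱`. -/
def foldSpace (X : Set (V → A)) (a : A) : Set (V → A) :=
  X ∩ {x | ∀ v, x v ≠ a}

/-- `Y` is a fold of `X` (and `X` an unfold of `Y`). -/
def IsFoldOf (G : SimpleGraph V) (Y X : Set (V → A)) : Prop :=
  ∃ a b : A, FoldsInto G X a b ∧ Y = foldSpace X a

/-- `P₁, P₂` are the partite classes of a bipartition of `G`. -/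
def IsBipartition (G : SimpleGraph V) (P₁ P₂ : Set V) : Prop :=
  (∀ v : V, v ∈ P₁ ∨ v ∈ P₂) ∧ Disjoint P₁ P₂ ∧
    ∀ u v : V, G.Adj u v → (u ∈ P₁ ∧ v ∈ P₂) ∨ (u ∈ P₂ ∧ v ∈ P₁)

/-- `G` is bipartite. -/
def Bipartite (G : SimpleGraph V) : Prop :=
  ∃ P₁ P₂ : Set V, IsBipartition G P₁ P₂

/-- `θ^v_c(x)`: change the value of `x` at `v` to `c`. -/
noncomputable def theta (x : V → A) (v : V) (c : A) : V → A :=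
  fun u => if u = v then c else x u

/-- `θ^{w₁,…,w_r}_{c₁,…,c_r}(x)`: change the value of `x` at each `w i` to `c i`. -/
noncomputable def multiUpdate (x : V → A) {r : ℕ} (w : Fin r → V) (c : Fin r → A) :
    V → A :=
  fun u => if h : ∃ i, w i = u then c h.choose else x u

/-- Restriction of a cocycle to the asymptotic pairs of a subspace `Y`. -/
noncomputable def restrictCocycle (Y : Set (V → A)) (M : (V → A) → (V → A) → ℝ) :
    (V → A) → (V → A) → ℝ :=
  fun x y => if (x, y) ∈ Delta Y then M x y else 0

/-- The pair `(x,y)` is `U`-good for the cocycle `M`. -/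
def VGood (M : (V → A) → (V → A) → ℝ) (U : ∀ F : Set V, (F → A) → ℝ)
    (x y : V → A) : Prop :=
  M x y = gibbsSum U x y

/-- `𝒱₁`: vertices `v` admitting a neighbour `w` with `(a,a) ∈ ℬ_{v,w}(X)`. -/
def Vone (G : SimpleGraph V) (X : Set (V → A)) (a : A) : Set V :=
  {v | ∃ w, G.Adj v w ∧ edgeB X v w a a}

/-- `𝒱₂`: vertices not in `𝒱₁` where the symbol `a` can appear. -/
def Vtwo (G : SimpleGraph V) (X : Set (V → A)) (a : A) : Set V :=
  {v | v ∉ Vone G X a ∧ siteB X v a}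

/-- The space of graph homomorphisms from `G` to `H`, as a configuration space. -/
def homSpace {B : Type*} (G : SimpleGraph V) (H : SimpleGraph B) : Set (V → B) :=
  {x | ∀ v w : V, G.Adj v w → H.Adj (x v) (x w)}

section Aux

variable {V : Type*} {A : Type*}
variable {G : SimpleGraph V} {P₁ P₂ : Set V} {X : Set (V → A)} {a b : A}

lemma bip_aux (hbip : IsBipartition G P₁ P₂) {u v t : V}
    (h1 : G.Adj u v) (h2 : G.Adj v t) : ¬ G.Adj u t := by
  obtain ⟨-, hdisj, hadj⟩ := hbip
  intro h3
  have d := Set.disjoint_left.mp hdisj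
  rcases hadj u v h1 with ⟨hu, hv⟩ | ⟨hu, hv⟩ <;>
    rcases hadj v t h2 with ⟨hv', ht⟩ | ⟨hv', ht⟩ <;>
    rcases hadj u t h3 with ⟨hu', ht'⟩ | ⟨hu', ht'⟩ <;>
    first
      | exact d hv hv' | exact d hv' hv | exact d hu hu' | exact d hu' hu
      | exact d ht ht' | exact d ht' ht

lemma clique_small (hbip : IsBipartition G P₁ P₂) {F : Set V}
    (hF : G.IsClique F) :
    F = ∅ ∨ (∃ u, F = {u}) ∨ ∃ u w, G.Adj u w ∧ F = {u, w} := by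
  by_cases h0 : F = ∅
  · exact Or.inl h0
  obtain ⟨u, hu⟩ := Set.nonempty_iff_ne_empty.mpr h0
  by_cases h1 : F ⊆ {u}
  · exact Or.inr (Or.inl ⟨u, Set.Subset.antisymm h1 (Set.singleton_subset_iff.mpr hu)⟩)
  obtain ⟨w, hw, hwu⟩ : ∃ w ∈ F, w ≠ u := by
    by_contra h
    push_neg at h
    exact h1 fun z hz => h z hz
  have hadj : G.Adj u w := hF hu hw (Ne.symm hwu)
  right; right
  refine ⟨u, w, hadj, ?_⟩
  apply Set.Subset.antisymm
  · intro t ht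
    by_contra htm
    simp only [Set.mem_insert_iff, Set.mem_singleton_iff, not_or] at htm
    have h3 : G.Adj u t := hF hu ht (Ne.symm htm.1)
    have h4 : G.Adj w t := hF hw ht (Ne.symm htm.2)
    exact bip_aux hbip hadj h4 h3
  · intro t ht
    rcases ht with rfl | ht
    · exact hu
    · rwa [Set.mem_singleton_iff.mp ht]

lemma mem_ball_one {v t : V} : t ∈ ballSet G v 1 ↔ t = v ∨ G.Adj v t := by
  constructor
  · rintro ⟨p, hp⟩
    cases p with
    | nil => exact Or.inl rfl
    | cons h q =>
      simp only [SimpleGraph.Walk.length_cons, add_le_iff_nonpos_left,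
        Nat.le_zero] at hp
      have := SimpleGraph.Walk.eq_of_length_eq_zero hp
      subst this
      exact Or.inr h
  · rintro (rfl | h)
    · exact ⟨.nil, by simp⟩
    · exact ⟨.cons h .nil, by simp⟩

lemma mem_ball_two_of_adj {v u : V} (h : G.Adj v u) : u ∈ ballSet G v 2 :=
  ⟨.cons h .nil, by simp⟩

lemma mem_ball_two_of_adj_adj {v u t : V} (h1 : G.Adj v u) (h2 : G.Adj u t) :
    t ∈ ballSet G v 2 :=
  ⟨.cons h1 (.cons h2 .nil), by simp⟩

end Aux
section Aux2

variable {V : Type*} {A : Type*}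
variable {G : SimpleGraph V} {P₁ P₂ : Set V} {X : Set (V → A)} {a b : A}

lemma mem_of_local (hbip : IsBipartition G P₁ P₂) (hX : IsNNConstraint G X)
    {x0 : V → A} (hx0 : x0 ∈ X) {y : V → A}
    (hsite : ∀ u, siteB X u (y u))
    (hedge : ∀ u w, G.Adj u w → edgeB X u w (y u) (y w)) : y ∈ X := by
  obtain ⟨𝓕, hXeq⟩ := hX
  subst hXeq
  intro F hfin hclq hmem
  rcases clique_small hbip hclq with rfl | ⟨u, rfl⟩ | ⟨u, w, hadj, rfl⟩
  · have : Set.restrict ∅ y = Set.restrict ∅ x0 :=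
      funext fun u => absurd u.2 (Set.notMem_empty _)
    rw [this] at hmem
    exact hx0 ∅ hfin hclq hmem
  · obtain ⟨z, hz, hzu⟩ := hsite u
    have : Set.restrict {u} y = Set.restrict {u} z := by
      funext p
      have : p.1 = u := Set.mem_singleton_iff.mp p.2
      show y p.1 = z p.1
      rw [this, hzu]
    rw [this] at hmem
    exact hz {u} hfin hclq hmem
  · obtain ⟨z, hz, hzu, hzw⟩ := hedge u w hadj
    have : Set.restrict {u, w} y = Set.restrict {u, w} z := by
      funext p
      rcases p.2 with h | h
      · show y p.1 = z p.1
        rw [h, hzu]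
      · show y p.1 = z p.1
        rw [Set.mem_singleton_iff.mp h, hzw]
    rw [this] at hmem
    exact hz {u, w} hfin hclq hmem

lemma edgeB_symm {u w : V} {c d : A} (h : edgeB X u w c d) : edgeB X w u d c := by
  obtain ⟨z, hz, h1, h2⟩ := h
  exact ⟨z, hz, h2, h1⟩

lemma edgeB_fold1 (hfold : FoldsInto G X a b) {v w : V} (hadj : G.Adj v w)
    {c : A} (h : edgeB X v w a c) : edgeB X v w b c :=
  (hfold.2 v w v hadj hadj.symm c h).1

lemma edgeB_fold2 (hfold : FoldsInto G X a b) {v w t : V} (h1 : G.Adj v w)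
    (h2 : G.Adj w t) {c : A} (h : edgeB X v w a c) : edgeB X w t c b :=
  (hfold.2 v w t h1 h2 c h).2.1

variable {xv : V → V → A}

lemma siteB_b (hfold : FoldsInto G X a b)
    (hxvfold : ∀ v ∈ Vone G X a ∪ Vtwo G X a, theta (xv v) v b ∈ foldSpace X a)
    {u : V} (h : siteB X u a) : siteB X u b := by
  have hu : u ∈ Vone G X a ∪ Vtwo G X a := by
    by_cases h1 : u ∈ Vone G X a
    · exact Or.inl h1
    · exact Or.inr ⟨h1, h⟩
  exact ⟨theta (xv u) u b, (hxvfold u hu).1, by simp [theta]⟩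

lemma theta_b_mem (hbip : IsBipartition G P₁ P₂) (hX : IsNNConstraint G X)
    (hfold : FoldsInto G X a b)
    (hxvfold : ∀ v ∈ Vone G X a ∪ Vtwo G X a, theta (xv v) v b ∈ foldSpace X a)
    {x : V → A} {v : V} (hx : x ∈ X) (hxv : x v = a) : theta x v b ∈ X := by
  apply mem_of_local hbip hX hx
  · intro u
    by_cases hu : u = v
    · subst hu
      simp only [theta, if_pos rfl]
      exact siteB_b hfold hxvfold ⟨x, hx, hxv⟩
    · simp only [theta, if_neg hu]
      exact ⟨x, hx, rfl⟩
  · intro u w hadj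
    by_cases hu : u = v
    · subst hu
      have hw : w ≠ u := hadj.ne'
      simp only [theta, if_pos rfl, if_neg hw]
      exact edgeB_fold1 hfold hadj ⟨x, hx, hxv, rfl⟩
    · by_cases hw : w = v
      · subst hw
        simp only [theta, if_pos rfl, if_neg hu]
        exact edgeB_symm (edgeB_fold1 hfold hadj.symm ⟨x, hx, hxv, rfl⟩)
      · simp only [theta, if_neg hu, if_neg hw]
        exact ⟨x, hx, rfl, rfl⟩

/-- The global fold map: replace every `a` by `b`. -/
noncomputable def foldc (a b : A) (x : V → A) : V → A :=
  fun u => if x u = a then b else x u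

lemma foldc_ne (hfold : FoldsInto G X a b) (x : V → A) (u : V) :
    foldc a b x u ≠ a := by
  unfold foldc
  split
  · exact Ne.symm hfold.1
  · assumption

lemma foldc_mem (hbip : IsBipartition G P₁ P₂) (hX : IsNNConstraint G X)
    (hfold : FoldsInto G X a b)
    (hxvfold : ∀ v ∈ Vone G X a ∪ Vtwo G X a, theta (xv v) v b ∈ foldSpace X a)
    {x : V → A} (hx : x ∈ X) : foldc a b x ∈ X := by
  apply mem_of_local hbip hX hx
  · intro u
    unfold foldc
    split
    · exact siteB_b hfold hxvfold ⟨x, hx, by assumption⟩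
    · exact ⟨x, hx, rfl⟩
  · intro u w hadj
    unfold foldc
    by_cases hu : x u = a <;> by_cases hw : x w = a <;>
      simp only [if_pos, if_neg, hu, hw, if_true, if_false]
    · -- both a : need edgeB u w b b
      have h1 : edgeB X u w a a := ⟨x, hx, hu, hw⟩
      have h2 : edgeB X w u a b := edgeB_symm (edgeB_fold1 hfold hadj h1)
      exact edgeB_symm (edgeB_fold1 hfold hadj.symm h2)
    · exact edgeB_fold1 hfold hadj ⟨x, hx, hu, rfl⟩
    · exact edgeB_symm (edgeB_fold1 hfold hadj.symm ⟨x, hx, hw, rfl⟩)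
    · exact ⟨x, hx, rfl, rfl⟩

end Aux2
section Aux3

variable {V : Type*} {A : Type*}
variable {G : SimpleGraph V} {P₁ P₂ : Set V} {X : Set (V → A)} {a b : A}

lemma restrict_eq_of_eqOn {F : Set V} {x y : V → A} (h : ∀ u ∈ F, x u = y u) :
    F.restrict x = F.restrict y :=
  funext fun u => h u.1 u.2

lemma gibbs_support (hbip : IsBipartition G P₁ P₂)
    (hlf : ∀ v : V, (G.neighborSet v).Finite)
    {U : ∀ F : Set V, (F → A) → ℝ} (hU : IsNNInteraction G U)
    {x y : V → A} (h : {u | x u ≠ y u}.Finite) :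
    (Function.support fun F : Set V =>
      U F (F.restrict y) - U F (F.restrict x)).Finite := by
  set D := {u | x u ≠ y u} with hD
  have hE : {p : V × V | p.1 ∈ D ∧ G.Adj p.1 p.2}.Finite := by
    apply Set.Finite.subset (h.prod (h.biUnion fun u _ => hlf u))
    rintro ⟨u, w⟩ ⟨h1, h2⟩
    exact ⟨h1, Set.mem_biUnion h1 h2⟩
  apply Set.Finite.subset
    ((h.image fun u => ({u} : Set V)).union
      (hE.image fun p => ({p.1, p.2} : Set V)))
  intro F hF
  rw [Function.mem_support] at hF
  by_cases hfc : F.Finite ∧ G.IsClique F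
  swap
  · rw [hU F hfc, hU F hfc, sub_self] at hF
    exact absurd rfl hF
  rcases clique_small hbip hfc.2 with rfl | ⟨w, rfl⟩ | ⟨u, w, hadj, rfl⟩
  · have : Set.restrict ∅ x = Set.restrict ∅ y :=
      funext fun u => absurd u.2 (Set.notMem_empty _)
    rw [this, sub_self] at hF
    exact absurd rfl hF
  · by_cases hw : x w = y w
    · have : Set.restrict {w} x = Set.restrict {w} y :=
        restrict_eq_of_eqOn fun u hu => by rwa [Set.mem_singleton_iff.mp hu]
      rw [this, sub_self] at hF
      exact absurd rfl hF
    · exact Or.inl ⟨w, hw, rfl⟩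
  · by_cases hu : x u = y u
    · by_cases hw : x w = y w
      · have : Set.restrict {u, w} x = Set.restrict {u, w} y := by
          apply restrict_eq_of_eqOn
          rintro t (rfl | ht)
          · exact hu
          · rwa [Set.mem_singleton_iff.mp ht]
        rw [this, sub_self] at hF
        exact absurd rfl hF
      · exact Or.inr ⟨(w, u), ⟨hw, hadj.symm⟩, by simp [Set.pair_comm]⟩
    · exact Or.inr ⟨(u, w), ⟨hu, hadj⟩, rfl⟩

lemma gibbsSum_self (U : ∀ F : Set V, (F → A) → ℝ) (x : V → A) :
    gibbsSum U x x = 0 := by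
  unfold gibbsSum
  simp

lemma gibbsSum_add (hbip : IsBipartition G P₁ P₂)
    (hlf : ∀ v : V, (G.neighborSet v).Finite)
    {U : ∀ F : Set V, (F → A) → ℝ} (hU : IsNNInteraction G U)
    {x y z : V → A} (hxy : {u | x u ≠ y u}.Finite) (hyz : {u | y u ≠ z u}.Finite) :
    gibbsSum U x z = gibbsSum U x y + gibbsSum U y z := by
  unfold gibbsSum
  rw [← finsum_add_distrib (gibbs_support hbip hlf hU hxy)
    (gibbs_support hbip hlf hU hyz)]
  apply finsum_congr
  intro F
  ring

lemma gibbsSum_local (hbip : IsBipartition G P₁ P₂)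
    {U : ∀ F : Set V, (F → A) → ℝ} (hU : IsNNInteraction G U)
    {x y z w : V → A} {S : Set V}
    (hxy : ∀ u, u ∉ S → x u = y u) (hzw : ∀ u, u ∉ S → z u = w u)
    (hmatch : ∀ u, u ∈ S ∪ boundary G S → x u = z u ∧ y u = w u) :
    gibbsSum U x y = gibbsSum U z w := by
  unfold gibbsSum
  apply finsum_congr
  intro F
  by_cases hfc : F.Finite ∧ G.IsClique F
  swap
  · rw [hU F hfc, hU F hfc, hU F hfc, hU F hfc]
  by_cases hFS : ∃ s ∈ F, s ∈ S
  · obtain ⟨s, hsF, hsS⟩ := hFS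
    have hsub : ∀ u ∈ F, u ∈ S ∪ boundary G S := by
      intro u huF
      by_cases huS : u ∈ S
      · exact Or.inl huS
      · have hne : u ≠ s := fun h => huS (h ▸ hsS)
        exact Or.inr ⟨huS, s, hsS, hfc.2 huF hsF hne⟩
    rw [restrict_eq_of_eqOn fun u hu => (hmatch u (hsub u hu)).1,
      restrict_eq_of_eqOn fun u hu => (hmatch u (hsub u hu)).2]
  · push_neg at hFS
    rw [restrict_eq_of_eqOn fun u hu => hxy u (hFS u hu),
      restrict_eq_of_eqOn fun u hu => hzw u (hFS u hu), sub_self, sub_self]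

end Aux3
section Aux4

variable {V : Type*} {A : Type*}

/-- Bundle of all the hypotheses of Statement 15. -/
structure Setup (G : SimpleGraph V) (P₁ P₂ : Set V) (X : Set (V → A)) (a b : A)
    (xv : V → V → A) (M : (V → A) → (V → A) → ℝ)
    (V' : ∀ F : Set V, (F → A) → ℝ) : Prop where
  hlf : ∀ v : V, (G.neighborSet v).Finite
  hbip : IsBipartition G P₁ P₂
  hX : IsNNConstraint G X
  hfold : FoldsInto G X a b
  hxvX : ∀ v ∈ Vone G X a ∪ Vtwo G X a, xv v ∈ X
  hxv1 : ∀ v ∈ Vone G X a,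
    xv v v = a ∧ ∀ u ∈ ballSet G v 2, u ≠ v → xv v u = b
  hxv2 : ∀ v ∈ Vtwo G X a,
    xv v v = a ∧ ∀ u ∈ boundary G (ballSet G v 1), xv v u = b
  hxvfold : ∀ v ∈ Vone G X a ∪ Vtwo G X a, theta (xv v) v b ∈ foldSpace X a
  hM : IsMarkovCocycle G X M
  hV' : IsNNInteraction G V'
  hgood1 : ∀ p ∈ Delta (foldSpace X a), VGood M V' p.1 p.2
  hgood2 : ∀ v ∈ Vone G X a ∪ Vtwo G X a, VGood M V' (theta (xv v) v b) (xv v)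
  hgood3 : ∀ v ∈ Vone G X a ∪ Vtwo G X a, ∀ w : V, G.Adj v w → ∀ c : A, c ≠ a →
    edgeB X v w a c → VGood M V' (theta (xv v) w c) (xv v)
  hgood4 : ∀ v ∈ Vone G X a ∩ P₁, ∀ w : V, G.Adj v w → edgeB X v w a a →
    VGood M V' (theta (xv v) w a) (xv v)

variable {G : SimpleGraph V} {P₁ P₂ : Set V} {X : Set (V → A)} {a b : A}
variable {xv : V → V → A} {M : (V → A) → (V → A) → ℝ}
variable {V' : ∀ F : Set V, (F → A) → ℝ}

/-- The difference cocycle. -/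
noncomputable def Ncoc (M : (V → A) → (V → A) → ℝ)
    (V' : ∀ F : Set V, (F → A) → ℝ) : (V → A) → (V → A) → ℝ :=
  fun x y => M x y - gibbsSum V' x y

namespace Setup

variable (S : Setup G P₁ P₂ X a b xv M V')
include S

lemma deltaMem {x y : V → A} (hx : x ∈ X) (hy : y ∈ X)
    (h : {u | x u ≠ y u}.Finite) : (x, y) ∈ Delta X := ⟨hx, hy, h⟩

lemma Mxx {x : V → A} (hx : x ∈ X) : M x x = 0 := by
  have hd : (x, x) ∈ Delta X := S.deltaMem hx hx (by simp)
  have := S.hM.2.1 x x x hd hd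
  linarith

lemma Nxx {x : V → A} (hx : x ∈ X) : Ncoc M V' x x = 0 := by
  unfold Ncoc
  rw [S.Mxx hx, gibbsSum_self, sub_self]

lemma Nadd {x y z : V → A} (h1 : (x, y) ∈ Delta X) (h2 : (y, z) ∈ Delta X) :
    Ncoc M V' x z = Ncoc M V' x y + Ncoc M V' y z := by
  unfold Ncoc
  rw [S.hM.2.1 x y z h1 h2, gibbsSum_add S.hbip S.hlf S.hV' h1.2.2 h2.2.2]
  ring

lemma deltaSymm {x y : V → A} (h : (x, y) ∈ Delta X) : (y, x) ∈ Delta X :=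
  ⟨h.2.1, h.1, by
    apply h.2.2.subset
    intro u hu
    exact Ne.symm hu⟩

lemma Nrev {x y : V → A} (h : (x, y) ∈ Delta X) :
    Ncoc M V' y x = - Ncoc M V' x y := by
  have := S.Nadd h (S.deltaSymm h)
  rw [S.Nxx h.1] at this
  linarith

lemma Nsim {x y z w : V → A} {T : Set V} (hT : T.Finite)
    (hx : x ∈ X) (hy : y ∈ X) (hz : z ∈ X) (hw : w ∈ X)
    (h1 : ∀ u, u ∉ T → x u = y u) (h2 : ∀ u, u ∉ T → z u = w u)
    (h3 : ∀ u, u ∈ T ∪ boundary G T → x u = z u ∧ y u = w u) :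
    Ncoc M V' x y = Ncoc M V' z w := by
  have d1 : (x, y) ∈ Delta X :=
    S.deltaMem hx hy (hT.subset fun u hu => by
      by_contra h; exact hu (h1 u h))
  have d2 : (z, w) ∈ Delta X :=
    S.deltaMem hz hw (hT.subset fun u hu => by
      by_contra h; exact hu (h2 u h))
  unfold Ncoc
  rw [S.hM.2.2 x y z w d1 d2 ⟨T, hT, fun u hu => ⟨h1 u hu, h2 u hu⟩, h3⟩,
    gibbsSum_local S.hbip S.hV' h1 h2 h3]

lemma Ngood {x y : V → A} (h : (x, y) ∈ Delta (foldSpace X a)) :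
    Ncoc M V' x y = 0 :=
  sub_eq_zero_of_eq (S.hgood1 (x, y) h)

lemma NL8 {x y : V → A} {D : Set V} (hD : D.Finite)
    (hx : x ∈ X) (hy : y ∈ X) (h1 : ∀ u, u ∉ D → x u = y u)
    (hno : ∀ u ∈ D ∪ boundary G D, x u ≠ a ∧ y u ≠ a) :
    Ncoc M V' x y = 0 := by
  have hz : foldc a b x ∈ X := foldc_mem S.hbip S.hX S.hfold S.hxvfold hx
  have hw : foldc a b y ∈ X := foldc_mem S.hbip S.hX S.hfold S.hxvfold hy
  have step : Ncoc M V' x y = Ncoc M V' (foldc a b x) (foldc a b y) := by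
    apply S.Nsim hD hx hy hz hw h1
    · intro u hu
      simp only [foldc, h1 u hu]
    · intro u hu
      constructor
      · simp only [foldc, if_neg (hno u hu).1]
      · simp only [foldc, if_neg (hno u hu).2]
  rw [step]
  apply S.Ngood
  refine ⟨⟨hz, fun u => foldc_ne S.hfold x u⟩, ⟨hw, fun u => foldc_ne S.hfold y u⟩, ?_⟩
  apply hD.subset
  intro u hu
  by_contra h
  exact hu (by simp only [foldc, h1 u h])

end Setup

end Aux4
section Aux5

variable {V : Type*} {A : Type*}
variable {G : SimpleGraph V} {P₁ P₂ : Set V} {X : Set (V → A)} {a b : A}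
variable {xv : V → V → A} {M : (V → A) → (V → A) → ℝ}
variable {V' : ∀ F : Set V, (F → A) → ℝ}

/-- Configuration equal to `d` on the neighbours of `v` and to `w` elsewhere. -/
noncomputable def cfgD (G : SimpleGraph V) (w d : V → A) (v : V) : V → A :=
  fun u => if G.Adj v u then d u else w u

/-- Mix of `w` (on `s`) and `x` (off `s`). -/
noncomputable def mixD (w x : V → A) (s : Finset V) : V → A :=
  fun u => if u ∈ s then w u else x u

namespace Setup

variable (S : Setup G P₁ P₂ X a b xv M V')
include S

lemma MLcore {v : V} (hva : siteB X v a) {x : V → A} (hx : x ∈ X)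
    (hxva : x v = a) (hor : v ∈ P₁ ∨ ∀ u, G.Adj v u → x u ≠ a) :
    Ncoc M V' x (theta x v b) = 0 := by
  have hbne : b ≠ a := Ne.symm S.hfold.1
  have hvV : v ∈ Vone G X a ∪ Vtwo G X a := by
    by_cases hv1 : v ∈ Vone G X a
    · exact Or.inl hv1
    · exact Or.inr ⟨hv1, hva⟩
  have hxo : xv v ∈ X := S.hxvX v hvV
  have hxvvv : xv v v = a := by
    rcases hvV with h | h
    exacts [(S.hxv1 v h).1, (S.hxv2 v h).1]
  have hfarb : ∀ u t, G.Adj v u → G.Adj u t → t ≠ v → xv v t = b := by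
    intro u t h1 h2 hne
    rcases hvV with h | h
    · exact (S.hxv1 v h).2 t (mem_ball_two_of_adj_adj h1 h2) hne
    · refine (S.hxv2 v h).2 t ⟨?_, u, mem_ball_one.mpr (Or.inr h1), h2.symm⟩
      intro htb
      rcases mem_ball_one.mp htb with rfl | hadj
      · exact hne rfl
      · exact bip_aux S.hbip h2.symm h1.symm hadj.symm
  have hnbrne : ∀ u, G.Adj v u → xv v u ≠ a := by
    intro u hu
    rcases hvV with h | h
    · rw [(S.hxv1 v h).2 u (mem_ball_two_of_adj hu) hu.ne']
      exact hbne
    · intro hc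
      exact h.1 ⟨u, hu, xv v, hxo, hxvvv, hc⟩
  -- membership of the glued configurations
  have hcfg_v : ∀ d : V → A, cfgD G (xv v) d v v = a := by
    intro d
    simp only [cfgD, if_neg (G.irrefl (v := v)), hxvvv]
  have hcfg_mem : ∀ d : V → A, (∀ u, G.Adj v u → edgeB X v u a (d u)) →
      cfgD G (xv v) d v ∈ X := by
    intro d hd
    apply mem_of_local S.hbip S.hX hxo
    · intro u
      by_cases hu : G.Adj v u
      · simp only [cfgD, if_pos hu]
        obtain ⟨z, hz, -, h2⟩ := hd u hu
        exact ⟨z, hz, h2⟩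
      · simp only [cfgD, if_neg hu]
        exact ⟨xv v, hxo, rfl⟩
    · intro u w hadj
      by_cases hu : G.Adj v u <;> by_cases hw : G.Adj v w
      · exact absurd hadj (bip_aux S.hbip hu.symm hw)
      · simp only [cfgD, if_pos hu, if_neg hw]
        by_cases hwv : w = v
        · subst hwv
          rw [hxvvv]
          exact edgeB_symm (hd u hu)
        · rw [hfarb u w hu hadj hwv]
          exact edgeB_fold2 S.hfold hu hadj (hd u hu)
      · simp only [cfgD, if_neg hu, if_pos hw]
        by_cases huv : u = v
        · subst huv
          rw [hxvvv]
          exact hd w hw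
        · rw [hfarb w u hw hadj.symm huv]
          exact edgeB_symm (edgeB_fold2 S.hfold hw hadj.symm (hd w hw))
      · have huv : u ≠ v := fun h => hw (h ▸ hadj)
        have hwv : w ≠ v := fun h => hu (h ▸ hadj.symm)
        simp only [cfgD, if_neg hu, if_neg hw]
        exact ⟨xv v, hxo, rfl, rfl⟩
  have htcfg_mem : ∀ d : V → A, (∀ u, G.Adj v u → edgeB X v u a (d u)) →
      theta (cfgD G (xv v) d v) v b ∈ X := fun d hd =>
    theta_b_mem S.hbip S.hX S.hfold S.hxvfold (hcfg_mem d hd) (hcfg_v d)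
  have hedx : ∀ u, G.Adj v u → edgeB X v u a (x u) :=
    fun u _ => ⟨x, hx, hxva, rfl⟩
  have hedxv : ∀ u, G.Adj v u → edgeB X v u a (xv v u) :=
    fun u _ => ⟨xv v, hxo, hxvvv, rfl⟩
  have hmixed : ∀ (s : Finset V) u, G.Adj v u →
      edgeB X v u a (mixD (xv v) x s u) := by
    intro s u hu
    unfold mixD
    split
    · exact hedxv u hu
    · exact hedx u hu
  have hdiffcfg : ∀ d d' : V → A,
      {u | cfgD G (xv v) d v u ≠ cfgD G (xv v) d' v u} ⊆ G.neighborSet v := by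
    intro d d' u hu
    by_contra hadj
    rw [SimpleGraph.mem_neighborSet] at hadj
    exact hu (by simp only [cfgD, if_neg hadj])
  have hdifft : ∀ d d' : V → A,
      {u | theta (cfgD G (xv v) d v) v b u ≠ theta (cfgD G (xv v) d' v) v b u} ⊆
        G.neighborSet v := by
    intro d d' u hu
    by_contra hadj
    rw [SimpleGraph.mem_neighborSet] at hadj
    apply hu
    by_cases huv : u = v
    · simp only [theta, if_pos huv]
    · simp only [theta, if_neg huv, cfgD, if_neg hadj]
  have hDelC : ∀ d d' : V → A, (∀ u, G.Adj v u → edgeB X v u a (d u)) →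
      (∀ u, G.Adj v u → edgeB X v u a (d' u)) →
      (cfgD G (xv v) d v, cfgD G (xv v) d' v) ∈ Delta X :=
    fun d d' h h' => S.deltaMem (hcfg_mem d h) (hcfg_mem d' h')
      ((S.hlf v).subset (hdiffcfg d d'))
  have hDelT : ∀ d d' : V → A, (∀ u, G.Adj v u → edgeB X v u a (d u)) →
      (∀ u, G.Adj v u → edgeB X v u a (d' u)) →
      (theta (cfgD G (xv v) d v) v b, theta (cfgD G (xv v) d' v) v b) ∈ Delta X :=
    fun d d' h h' => S.deltaMem (htcfg_mem d h) (htcfg_mem d' h')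
      ((S.hlf v).subset (hdifft d d'))
  have chain : ∀ s : Finset V, (∀ u ∈ s, G.Adj v u) →
      Ncoc M V' (cfgD G (xv v) x v) (cfgD G (xv v) (mixD (xv v) x s) v) = 0 ∧
      Ncoc M V' (theta (cfgD G (xv v) x v) v b)
        (theta (cfgD G (xv v) (mixD (xv v) x s) v) v b) = 0 := by
    intro s
    induction s using Finset.induction_on with
    | empty =>
      intro _
      have hmix0 : mixD (xv v) x (∅ : Finset V) = x := funext fun u => by
        simp [mixD]
      rw [hmix0]
      exact ⟨S.Nxx (hcfg_mem x hedx), S.Nxx (htcfg_mem x hedx)⟩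
    | @insert u s hus ih =>
      intro hsub
      have hu : G.Adj v u := hsub u (Finset.mem_insert_self u s)
      have hs : ∀ t ∈ s, G.Adj v t := fun t ht => hsub t (Finset.mem_insert_of_mem ht)
      obtain ⟨IH1, IH2⟩ := ih hs
      have hune : u ≠ v := hu.ne'
      have hmixs_u : mixD (xv v) x s u = x u := by simp [mixD, hus]
      have hmixi_u : mixD (xv v) x (insert u s) u = xv v u := by simp [mixD]
      have hmix_ne : ∀ t, t ≠ u →
          mixD (xv v) x (insert u s) t = mixD (xv v) x s t := by
        intro t ht
        simp [mixD, Finset.mem_insert, ht]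
      have hCoff : ∀ t, t ∉ ({u} : Set V) →
          cfgD G (xv v) (mixD (xv v) x s) v t
            = cfgD G (xv v) (mixD (xv v) x (insert u s)) v t := by
        intro t ht
        rw [Set.mem_singleton_iff] at ht
        unfold cfgD
        split
        · exact (hmix_ne t ht).symm
        · rfl
      have hC1u : cfgD G (xv v) (mixD (xv v) x s) v u = x u := by
        simp only [cfgD, if_pos hu, hmixs_u]
      have hC2u : cfgD G (xv v) (mixD (xv v) x (insert u s)) v u = xv v u := by
        simp only [cfgD, if_pos hu, hmixi_u]
      have hbdy : ∀ t, t ∈ boundary G ({u} : Set V) → t ≠ u ∧ G.Adj t u := by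
        rintro t ⟨ht1, s', hs', hadj⟩
        rw [Set.mem_singleton_iff] at hs'
        exact ⟨fun h => ht1 (Set.mem_singleton_iff.mpr h), hs' ▸ hadj⟩
      have hCbdy : ∀ (d : V → A) t, t ≠ u → G.Adj t u →
          cfgD G (xv v) d v t = if t = v then a else xv v t := by
        intro d t ht hadj
        by_cases htv : t = v
        · subst htv; rw [if_pos rfl]; exact hcfg_v d
        · rw [if_neg htv]
          have hnadj : ¬ G.Adj v t := fun h =>
            bip_aux S.hbip hadj hu.symm h.symm
          simp only [cfgD, if_neg hnadj]
      have hK1mem : ∀ c : A, edgeB X v u a c → theta (xv v) u c ∈ X := by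
        intro c hc
        have hrw : theta (xv v) u c
            = cfgD G (xv v) (fun t => if t = u then c else xv v t) v := by
          funext t
          by_cases ht : t = u
          · subst ht; simp only [theta, if_pos rfl, cfgD, if_pos hu]
          · simp only [theta, if_neg ht, cfgD]
            split <;> simp [ht]
        rw [hrw]
        apply hcfg_mem
        intro t hta
        by_cases ht : t = u
        · subst ht; simpa using hc
        · simpa [ht] using hedxv t hta
      have stepA : Ncoc M V' (cfgD G (xv v) (mixD (xv v) x s) v)
          (cfgD G (xv v) (mixD (xv v) x (insert u s)) v) = 0 := by
        have hsim : Ncoc M V' (cfgD G (xv v) (mixD (xv v) x s) v)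
            (cfgD G (xv v) (mixD (xv v) x (insert u s)) v)
            = Ncoc M V' (theta (xv v) u (x u)) (xv v) := by
          apply S.Nsim (Set.finite_singleton u)
            (hcfg_mem _ (hmixed s)) (hcfg_mem _ (hmixed (insert u s)))
            (hK1mem (x u) (hedx u hu)) hxo
          · exact hCoff
          · intro t ht
            rw [Set.mem_singleton_iff] at ht
            simp only [theta, if_neg ht]
          · intro t ht
            rw [Set.mem_union] at ht
            rcases ht with ht | ht
            · rw [Set.mem_singleton_iff] at ht
              subst ht
              refine ⟨?_, by rw [hC2u]⟩
              rw [hC1u]; simp [theta]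
            · obtain ⟨htu, hadj⟩ := hbdy t ht
              have h1 := hCbdy (mixD (xv v) x s) t htu hadj
              have h2 := hCbdy (mixD (xv v) x (insert u s)) t htu hadj
              constructor
              · rw [h1]
                simp only [theta, if_neg htu]
                split
                · next htv => rw [htv, hxvvv]
                · rfl
              · rw [h2]
                split
                · next htv => rw [htv, hxvvv]
                · rfl
        rw [hsim]
        by_cases hxu : x u = a
        · have hvone : v ∈ Vone G X a := ⟨u, hu, x, hx, hxva, hxu⟩
          rcases hor with hP1 | hno
          · rw [hxu]
            exact sub_eq_zero_of_eq (S.hgood4 v ⟨hvone, hP1⟩ u hu ⟨x, hx, hxva, hxu⟩)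
          · exact absurd hxu (hno u hu)
        · exact sub_eq_zero_of_eq (S.hgood3 v hvV u hu (x u) hxu (hedx u hu))
      have hoff : ∀ t, t ∉ ({u} : Set V) →
          theta (cfgD G (xv v) (mixD (xv v) x s) v) v b t
            = theta (cfgD G (xv v) (mixD (xv v) x (insert u s)) v) v b t := by
        intro t ht
        by_cases htv : t = v
        · simp only [theta, if_pos htv]
        · simp only [theta, if_neg htv]
          exact hCoff t ht
      have hlhsb : ∀ (d : V → A) t, t ≠ u → G.Adj t u →
          theta (cfgD G (xv v) d v) v b t = b := by
        intro d t htu hadj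
        by_cases htv : t = v
        · simp only [theta, if_pos htv]
        · simp only [theta, if_neg htv]
          rw [hCbdy d t htu hadj, if_neg htv]
          exact hfarb u t hu hadj.symm htv
      have stepB : Ncoc M V' (theta (cfgD G (xv v) (mixD (xv v) x s) v) v b)
          (theta (cfgD G (xv v) (mixD (xv v) x (insert u s)) v) v b) = 0 := by
        by_cases hxu : x u = a
        · have hvone : v ∈ Vone G X a := ⟨u, hu, x, hx, hxva, hxu⟩
          have huV1 : u ∈ Vone G X a := ⟨v, hu.symm, x, hx, hxu, hxva⟩
          have hxvu_b : xv v u = b :=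
            (S.hxv1 v hvone).2 u (mem_ball_two_of_adj hu) hune
          have hxuu : xv u u = a := (S.hxv1 u huV1).1
          have hxub : ∀ t, t ≠ u → G.Adj u t → xv u t = b := fun t ht hadj =>
            (S.hxv1 u huV1).2 t (mem_ball_two_of_adj hadj) ht
          have hsim : Ncoc M V' (theta (cfgD G (xv v) (mixD (xv v) x s) v) v b)
              (theta (cfgD G (xv v) (mixD (xv v) x (insert u s)) v) v b)
              = Ncoc M V' (xv u) (theta (xv u) u b) := by
            apply S.Nsim (Set.finite_singleton u)
              (htcfg_mem _ (hmixed s)) (htcfg_mem _ (hmixed (insert u s)))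
              (S.hxvX u (Or.inl huV1)) (S.hxvfold u (Or.inl huV1)).1
            · exact hoff
            · intro t ht
              rw [Set.mem_singleton_iff] at ht
              simp only [theta, if_neg ht]
            · intro t ht
              rw [Set.mem_union] at ht
              rcases ht with ht | ht
              · rw [Set.mem_singleton_iff] at ht
                subst ht
                constructor
                · simp [theta, hune, hC1u, hxu, hxuu]
                · simp [theta, hune, hC2u, hxvu_b]
              · obtain ⟨htu, hadj⟩ := hbdy t ht
                have hrhs : xv u t = b := hxub t htu hadj.symm
                constructor
                · rw [hlhsb _ t htu hadj, hrhs]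
                · rw [hlhsb _ t htu hadj]
                  simp only [theta, if_neg htu, hrhs]
          rw [hsim]
          have hdel : (theta (xv u) u b, xv u) ∈ Delta X := by
            apply S.deltaMem (S.hxvfold u (Or.inl huV1)).1 (S.hxvX u (Or.inl huV1))
            apply (Set.finite_singleton u).subset
            intro t ht
            by_contra htu
            rw [Set.mem_singleton_iff] at htu
            exact ht (by simp [theta, htu])
          have h0 : Ncoc M V' (theta (xv u) u b) (xv u) = 0 :=
            sub_eq_zero_of_eq (S.hgood2 u (Or.inl huV1))
          rw [S.Nrev hdel, h0, neg_zero]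
        · apply S.NL8 (Set.finite_singleton u)
            (htcfg_mem _ (hmixed s)) (htcfg_mem _ (hmixed (insert u s))) hoff
          intro t ht
          rw [Set.mem_union] at ht
          rcases ht with ht | ht
          · rw [Set.mem_singleton_iff] at ht
            subst ht
            constructor
            · simp only [theta, if_neg hune]
              rw [hC1u]; exact hxu
            · simp only [theta, if_neg hune]
              rw [hC2u]; exact hnbrne _ hu
          · obtain ⟨htu, hadj⟩ := hbdy t ht
            constructor <;> rw [hlhsb _ t htu hadj] <;> exact hbne
      constructor
      · rw [S.Nadd (hDelC x (mixD (xv v) x s) hedx (hmixed s))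
            (hDelC (mixD (xv v) x s) (mixD (xv v) x (insert u s))
              (hmixed s) (hmixed (insert u s))), IH1, stepA, add_zero]
      · rw [S.Nadd (hDelT x (mixD (xv v) x s) hedx (hmixed s))
            (hDelT (mixD (xv v) x s) (mixD (xv v) x (insert u s))
              (hmixed s) (hmixed (insert u s))), IH2, stepB, add_zero]
  have hmixfull : cfgD G (xv v) (mixD (xv v) x (S.hlf v).toFinset) v = xv v := by
    funext t
    unfold cfgD mixD
    by_cases ht : G.Adj v t
    · rw [if_pos ht, if_pos ((S.hlf v).mem_toFinset.mpr ht)]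
    · rw [if_neg ht]
  have hch := chain (S.hlf v).toFinset (fun u hu => (S.hlf v).mem_toFinset.mp hu)
  rw [hmixfull] at hch
  have hsim0 : Ncoc M V' x (theta x v b)
      = Ncoc M V' (cfgD G (xv v) x v) (theta (cfgD G (xv v) x v) v b) := by
    apply S.Nsim (Set.finite_singleton v) hx
      (theta_b_mem S.hbip S.hX S.hfold S.hxvfold hx hxva)
      (hcfg_mem x hedx) (htcfg_mem x hedx)
    · intro t ht
      rw [Set.mem_singleton_iff] at ht
      simp only [theta, if_neg ht]
    · intro t ht
      rw [Set.mem_singleton_iff] at ht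
      simp only [theta, if_neg ht]
    · intro t ht
      rw [Set.mem_union] at ht
      rcases ht with ht | ht
      · rw [Set.mem_singleton_iff] at ht
        subst ht
        refine ⟨?_, by simp [theta]⟩
        rw [hxva, hcfg_v x]
      · obtain ⟨ht1, s', hs', hadj⟩ := ht
        rw [Set.mem_singleton_iff] at hs'
        rw [hs'] at hadj
        have ht1' : t ≠ v := fun h => ht1 (Set.mem_singleton_iff.mpr h)
        have hvt : G.Adj v t := hadj.symm
        constructor
        · simp only [cfgD, if_pos hvt]
        · simp only [theta, if_neg ht1', cfgD, if_pos hvt]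
  rw [hsim0]
  have d1 : (cfgD G (xv v) x v, xv v) ∈ Delta X := by
    have h := hDelC x (mixD (xv v) x (S.hlf v).toFinset) hedx (hmixed _)
    rwa [hmixfull] at h
  have d2 : (xv v, theta (xv v) v b) ∈ Delta X := by
    apply S.deltaMem hxo (S.hxvfold v hvV).1
    apply (Set.finite_singleton v).subset
    intro t ht
    by_contra htv
    rw [Set.mem_singleton_iff] at htv
    exact ht (by simp [theta, htv])
  have d3 : (theta (xv v) v b, theta (cfgD G (xv v) x v) v b) ∈ Delta X := by
    have h := hDelT (mixD (xv v) x (S.hlf v).toFinset) x (hmixed _) hedx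
    rwa [hmixfull] at h
  have d23 : (xv v, theta (cfgD G (xv v) x v) v b) ∈ Delta X := by
    refine ⟨d2.1, d3.2.1, ?_⟩
    apply (d2.2.2.union d3.2.2).subset
    intro t ht
    by_contra hc
    simp only [Set.mem_union, Set.mem_setOf_eq, not_or, not_not] at hc
    exact ht (hc.1.trans hc.2)
  rw [S.Nadd d1 d23, S.Nadd d2 d3, hch.1]
  have h2 : Ncoc M V' (xv v) (theta (xv v) v b) = 0 := by
    have h0 : Ncoc M V' (theta (xv v) v b) (xv v) = 0 :=
      sub_eq_zero_of_eq (S.hgood2 v hvV)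
    rw [S.Nrev (S.deltaSymm d2), h0, neg_zero]
  have h3 : Ncoc M V' (theta (xv v) v b) (theta (cfgD G (xv v) x v) v b) = 0 := by
    rw [S.Nrev (S.deltaSymm d3), hch.2, neg_zero]
  rw [h2, h3]
  ring

end Setup

end Aux5
section Aux6

variable {V : Type*} {A : Type*}
variable {G : SimpleGraph V} {P₁ P₂ : Set V} {X : Set (V → A)} {a b : A}
variable {xv : V → V → A} {M : (V → A) → (V → A) → ℝ}
variable {V' : ∀ F : Set V, (F → A) → ℝ}

namespace Setup

variable (S : Setup G P₁ P₂ X a b xv M V')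
include S

lemma classP1 {v u : V} (hv : v ∈ P₂) (hadj : G.Adj v u) : u ∈ P₁ := by
  rcases S.hbip.2.2 v u hadj with ⟨hv1, _⟩ | ⟨_, hu1⟩
  · exact absurd hv (Set.disjoint_left.mp S.hbip.2.1 hv1)
  · exact hu1

lemma FlipP1 {v : V} (hv : v ∈ P₁) {x : V → A} (hx : x ∈ X) (hxva : x v = a) :
    Ncoc M V' x (theta x v b) = 0 :=
  S.MLcore ⟨x, hx, hxva⟩ hx hxva (Or.inl hv)

lemma foldChain : ∀ s : Finset V,
    (∀ u ∈ s, ∀ z : V → A, z ∈ X → z u = a → Ncoc M V' z (theta z u b) = 0) →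
    ∀ x : V → A, x ∈ X → (∀ u ∈ s, x u = a) →
    ((fun u => if u ∈ s then b else x u) ∈ X ∧
      Ncoc M V' x (fun u => if u ∈ s then b else x u) = 0) := by
  intro s
  induction s using Finset.induction_on with
  | empty =>
    intro _ x hx _
    have h : (fun u => if u ∈ (∅ : Finset V) then b else x u) = x :=
      funext fun u => by simp
    rw [h]
    exact ⟨hx, S.Nxx hx⟩
  | @insert u s hus ih =>
    intro hflip x hx hval
    have hu : x u = a := hval u (Finset.mem_insert_self u s)
    obtain ⟨hmem, hN⟩ := ih (fun t ht => hflip t (Finset.mem_insert_of_mem ht)) x hx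
      (fun t ht => hval t (Finset.mem_insert_of_mem ht))
    have hyu : (fun t => if t ∈ s then b else x t) u = a := by simp [hus, hu]
    have heq : (fun t => if t ∈ insert u s then b else x t)
        = theta (fun t => if t ∈ s then b else x t) u b := by
      funext t
      by_cases htu : t = u
      · subst htu; simp [theta]
      · simp [theta, htu, Finset.mem_insert]
    rw [heq]
    have hmem2 : theta (fun t => if t ∈ s then b else x t) u b ∈ X :=
      theta_b_mem S.hbip S.hX S.hfold S.hxvfold hmem hyu
    have hstep : Ncoc M V' (fun t => if t ∈ s then b else x t)
        (theta (fun t => if t ∈ s then b else x t) u b) = 0 :=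
      hflip u (Finset.mem_insert_self u s) _ hmem hyu
    refine ⟨hmem2, ?_⟩
    have hd1 : (x, fun t => if t ∈ s then b else x t) ∈ Delta X :=
      S.deltaMem hx hmem (s.finite_toSet.subset (fun t ht => by
        by_contra hc
        rw [Finset.mem_coe] at hc
        exact ht (by simp [hc])))
    have hd2 : ((fun t => if t ∈ s then b else x t),
        theta (fun t => if t ∈ s then b else x t) u b) ∈ Delta X :=
      S.deltaMem hmem hmem2 ((Set.finite_singleton u).subset (fun t ht => by
        by_contra hc
        rw [Set.mem_singleton_iff] at hc
        exact ht (by simp [theta, hc])))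
    rw [S.Nadd hd1 hd2, hN, hstep, add_zero]

lemma Flip (v : V) {x : V → A} (hx : x ∈ X) (hxva : x v = a) :
    Ncoc M V' x (theta x v b) = 0 := by
  rcases S.hbip.1 v with hv | hv
  · exact S.FlipP1 hv hx hxva
  · classical
    set aN : Finset V := (S.hlf v).toFinset.filter (fun u => x u = a) with haN
    have haNmem : ∀ u, u ∈ aN ↔ (G.Adj v u ∧ x u = a) := by
      intro u
      simp [haN, Finset.mem_filter, (S.hlf v).mem_toFinset, SimpleGraph.mem_neighborSet]
    have hflip : ∀ u ∈ aN, ∀ z : V → A, z ∈ X → z u = a →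
        Ncoc M V' z (theta z u b) = 0 := by
      intro u hu z hz hza
      exact S.FlipP1 (S.classP1 hv ((haNmem u).mp hu).1) hz hza
    obtain ⟨hY, hNY⟩ := S.foldChain aN hflip x hx (fun u hu => ((haNmem u).mp hu).2)
    have hvnot : v ∉ aN := fun h => G.irrefl ((haNmem v).mp h).1
    have hYv : (fun t => if t ∈ aN then b else x t) v = a := by simp [hvnot, hxva]
    have hYnoa : ∀ u, G.Adj v u → (fun t => if t ∈ aN then b else x t) u ≠ a := by
      intro u hu
      by_cases hxa : x u = a
      · have h1 : u ∈ aN := (haNmem u).mpr ⟨hu, hxa⟩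
        simpa [h1] using Ne.symm S.hfold.1
      · have h1 : u ∉ aN := fun h => hxa ((haNmem u).mp h).2
        simpa [h1] using hxa
    have hmid : Ncoc M V' (fun t => if t ∈ aN then b else x t)
        (theta (fun t => if t ∈ aN then b else x t) v b) = 0 :=
      S.MLcore ⟨x, hx, hxva⟩ hY hYv (Or.inr hYnoa)
    have hθx : theta x v b ∈ X := theta_b_mem S.hbip S.hX S.hfold S.hxvfold hx hxva
    have hθval : ∀ u ∈ aN, theta x v b u = a := by
      intro u hu
      have hne : u ≠ v := fun h => hvnot (h ▸ hu)
      simp [theta, hne, ((haNmem u).mp hu).2]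
    obtain ⟨hY', hNY'⟩ := S.foldChain aN hflip (theta x v b) hθx hθval
    have hYeq : (fun t => if t ∈ aN then b else theta x v b t)
        = theta (fun t => if t ∈ aN then b else x t) v b := by
      funext t
      by_cases htv : t = v
      · subst htv; simp [theta, hvnot]
      · simp [theta, htv]
    rw [hYeq] at hNY' hY'
    have hθY : theta (fun t => if t ∈ aN then b else x t) v b ∈ X := hY'
    have hd1 : (x, fun t => if t ∈ aN then b else x t) ∈ Delta X :=
      S.deltaMem hx hY (aN.finite_toSet.subset (fun t ht => by
        by_contra hc
        rw [Finset.mem_coe] at hc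
        exact ht (by simp [hc])))
    have hd2 : ((fun t => if t ∈ aN then b else x t),
        theta (fun t => if t ∈ aN then b else x t) v b) ∈ Delta X :=
      S.deltaMem hY hθY ((Set.finite_singleton v).subset (fun t ht => by
        by_contra hc
        rw [Set.mem_singleton_iff] at hc
        exact ht (by simp [theta, hc])))
    have hd3' : (theta x v b, theta (fun t => if t ∈ aN then b else x t) v b) ∈ Delta X :=
      S.deltaMem hθx hθY (aN.finite_toSet.subset (fun t ht => by
        by_contra hc
        rw [Finset.mem_coe] at hc
        exact ht (by simp [theta, hc])))
    have hd3 : (theta (fun t => if t ∈ aN then b else x t) v b, theta x v b) ∈ Delta X :=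
      S.deltaSymm hd3'
    have hd23 : ((fun t => if t ∈ aN then b else x t), theta x v b) ∈ Delta X := by
      refine ⟨hd2.1, hd3.2.1, ?_⟩
      apply (hd2.2.2.union hd3.2.2).subset
      intro t ht
      by_contra hc
      simp only [Set.mem_union, Set.mem_setOf_eq, not_or, not_not] at hc
      exact ht (hc.1.trans hc.2)
    rw [S.Nadd hd1 hd23, S.Nadd hd2 hd3, hNY, hmid, S.Nrev hd3', hNY']
    ring

lemma key {x y : V → A} (h : (x, y) ∈ Delta X) : M x y = gibbsSum V' x y := by
  classical
  have hS : {u | x u ≠ y u}.Finite := h.2.2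
  have hB : (boundary G {u | x u ≠ y u}).Finite := by
    apply Set.Finite.subset (hS.biUnion fun s _ => S.hlf s)
    rintro t ⟨ht1, s', hs', hadj⟩
    exact Set.mem_biUnion hs' hadj.symm
  have hK : ({u | x u ≠ y u} ∪ boundary G {u | x u ≠ y u}).Finite := hS.union hB
  set aKx : Finset V := hK.toFinset.filter (fun u => x u = a) with haKx
  set aKy : Finset V := hK.toFinset.filter (fun u => y u = a) with haKy
  have hflipall : ∀ (s : Finset V), ∀ u ∈ s, ∀ z : V → A, z ∈ X → z u = a →
      Ncoc M V' z (theta z u b) = 0 := fun s u _ z hz hza => S.Flip u hz hza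
  obtain ⟨hx', hNx⟩ := S.foldChain aKx (hflipall aKx) x h.1
    (fun u hu => (Finset.mem_filter.mp hu).2)
  obtain ⟨hy', hNy⟩ := S.foldChain aKy (hflipall aKy) y h.2.1
    (fun u hu => (Finset.mem_filter.mp hu).2)
  have hmid : Ncoc M V' (fun t => if t ∈ aKx then b else x t)
      (fun t => if t ∈ aKy then b else y t) = 0 := by
    apply S.NL8 hS hx' hy'
    · intro u hu
      have hxy : x u = y u := not_not.mp hu
      have hiff : u ∈ aKx ↔ u ∈ aKy := by
        simp [haKx, haKy, Finset.mem_filter, hxy]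
      by_cases h1 : u ∈ aKx
      · simp [h1, hiff.mp h1]
      · have h2 : u ∉ aKy := fun hh => h1 (hiff.mpr hh)
        simp [h1, h2, hxy]
    · intro u hu
      have huK : u ∈ hK.toFinset := hK.mem_toFinset.mpr hu
      constructor
      · by_cases hxa : x u = a
        · have h1 : u ∈ aKx := Finset.mem_filter.mpr ⟨huK, hxa⟩
          simpa [h1] using Ne.symm S.hfold.1
        · have h1 : u ∉ aKx := fun hh => hxa (Finset.mem_filter.mp hh).2
          simpa [h1] using hxa
      · by_cases hya : y u = a
        · have h1 : u ∈ aKy := Finset.mem_filter.mpr ⟨huK, hya⟩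
          simpa [h1] using Ne.symm S.hfold.1
        · have h1 : u ∉ aKy := fun hh => hya (Finset.mem_filter.mp hh).2
          simpa [h1] using hya
  have hd1 : (x, fun t => if t ∈ aKx then b else x t) ∈ Delta X :=
    S.deltaMem h.1 hx' (aKx.finite_toSet.subset (fun t ht => by
      by_contra hc
      rw [Finset.mem_coe] at hc
      exact ht (by simp [hc])))
  have hd4 : (y, fun t => if t ∈ aKy then b else y t) ∈ Delta X :=
    S.deltaMem h.2.1 hy' (aKy.finite_toSet.subset (fun t ht => by
      by_contra hc
      rw [Finset.mem_coe] at hc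
      exact ht (by simp [hc])))
  have hdm : ((fun t => if t ∈ aKx then b else x t),
      (fun t => if t ∈ aKy then b else y t)) ∈ Delta X := by
    refine ⟨hx', hy', ?_⟩
    apply hK.subset
    intro t ht
    by_contra hc
    apply ht
    have htK : t ∉ hK.toFinset := fun hh => hc (hK.mem_toFinset.mp hh)
    have h1 : t ∉ aKx := fun hh => htK (Finset.mem_filter.mp hh).1
    have h2 : t ∉ aKy := fun hh => htK (Finset.mem_filter.mp hh).1
    have hxy : x t = y t := not_not.mp (fun hne => hc (Or.inl hne))
    simp [h1, h2, hxy]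
  have hd5 : ((fun t => if t ∈ aKx then b else x t), y) ∈ Delta X := by
    refine ⟨hx', h.2.1, ?_⟩
    apply (hdm.2.2.union (S.deltaSymm hd4).2.2).subset
    intro t ht
    by_contra hc
    simp only [Set.mem_union, Set.mem_setOf_eq, not_or, not_not] at hc
    exact ht (hc.1.trans hc.2)
  have htot : Ncoc M V' x y = 0 := by
    rw [S.Nadd hd1 hd5, S.Nadd hdm (S.deltaSymm hd4), hNx, hmid, S.Nrev hd4, hNy]
    ring
  have := htot
  unfold Ncoc at this
  linarith

end Setup

end Aux6

/-- If `V'` is a nearest neighbour interaction making the pairs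
(1)-(4) `V'`-good, then the Markov cocycle `M` is the Gibbs cocycle of `V'`;
in particular `M ∈ 𝐆_X`. -/
theorem statement15 [Countable V] [Fintype A]
    (G : SimpleGraph V) (hlf : ∀ v : V, (G.neighborSet v).Finite)
    (P₁ P₂ : Set V) (hbip : IsBipartition G P₁ P₂)
    (X : Set (V → A)) (hX : IsNNConstraint G X)
    (a b : A) (hfold : FoldsInto G X a b)
    (xv : V → V → A)
    (hxvX : ∀ v ∈ Vone G X a ∪ Vtwo G X a, xv v ∈ X)
    (hxv1 : ∀ v ∈ Vone G X a,
      xv v v = a ∧ ∀ u ∈ ballSet G v 2, u ≠ v → xv v u = b)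
    (hxv2 : ∀ v ∈ Vtwo G X a,
      xv v v = a ∧ ∀ u ∈ boundary G (ballSet G v 1), xv v u = b)
    (hxvfold : ∀ v ∈ Vone G X a ∪ Vtwo G X a, theta (xv v) v b ∈ foldSpace X a)
    (hxvmulti : ∀ v ∈ Vone G X a ∪ Vtwo G X a,
      ∀ (r : ℕ) (w : Fin r → V) (c : Fin r → A), Function.Injective w →
        (∀ i, G.Adj v (w i)) → (∀ i, edgeB X v (w i) a (c i)) →
        multiUpdate (xv v) w c ∈ X)
    (M : (V → A) → (V → A) → ℝ) (hM : IsMarkovCocycle G X M)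
    (U : ∀ F : Set V, (F → A) → ℝ) (hU : IsNNInteraction G U)
    (hMU : ∀ x y : V → A, (x, y) ∈ Delta (foldSpace X a) → M x y = gibbsSum U x y)
    (V' : ∀ F : Set V, (F → A) → ℝ) (hV' : IsNNInteraction G V')
    -- (1) every pair in `Δ_{X_a}` is `V'`-good
    (hgood1 : ∀ p ∈ Delta (foldSpace X a), VGood M V' p.1 p.2)
    -- (2) `(θ^v_b(x^v), x^v)` is `V'`-good
    (hgood2 : ∀ v ∈ Vone G X a ∪ Vtwo G X a, VGood M V' (theta (xv v) v b) (xv v))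
    -- (3) `(θ^w_c(x^v), x^v)` is `V'`-good
    (hgood3 : ∀ v ∈ Vone G X a ∪ Vtwo G X a, ∀ w : V, G.Adj v w → ∀ c : A, c ≠ a →
      edgeB X v w a c → VGood M V' (theta (xv v) w c) (xv v))
    -- (4) `(θ^w_a(x^v), x^v)` is `V'`-good
    (hgood4 : ∀ v ∈ Vone G X a ∩ P₁, ∀ w : V, G.Adj v w → edgeB X v w a a →
      VGood M V' (theta (xv v) w a) (xv v)) :
    (∀ x y : V → A, (x, y) ∈ Delta X → M x y = gibbsSum V' x y) ∧
      M ∈ gibbsSet G X := by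
  have S : Setup G P₁ P₂ X a b xv M V' :=
    ⟨hlf, hbip, hX, hfold, hxvX, hxv1, hxv2, hxvfold, hM, hV',
      hgood1, hgood2, hgood3, hgood4⟩
  have key : ∀ x y : V → A, (x, y) ∈ Delta X → M x y = gibbsSum V' x y :=
    fun x y h => S.key h
  exact ⟨key, hM.1, V', hV', key⟩

end HC
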